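/- In U_q(sl4^+), with X1 = e1, X4 = e2, X6 = e3, X2 = e1 e2 - q^{-1} e2 e1, X5 = e2 e3 - q^{-1} e3 e2, X3 = e1 X5 - q^{-1} X5 e1, the element Delta_1 = X3 satisfies e2 * Delta_1 = Delta_1 * e2, e1 * Delta_1 = q * Delta_1 * e1, and e3 * Delta_1 = q^{-1} * Delta_1 * e3. -/

import Mathlib

noncomputable section

open FreeAlgebra

/-- The defining relations of `U_q(sl4^+)`: `e1 e3 = e3 e1` and the quantum Serre
relations `e_i^2 e_j - (q+q⁻¹) e_i e_j e_i + e_j e_i^2 = 0` for `|i-j| = 1`. -/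
inductive UqRel (K : Type) [Field K] (q : K) :
    FreeAlgebra K (Fin 3) → FreeAlgebra K (Fin 3) → Prop
  | comm : UqRel K q (ι K 0 * ι K 2) (ι K 2 * ι K 0)
  | serre (i j : Fin 3) (h : i.val = j.val + 1 ∨ j.val = i.val + 1) :
      UqRel K q (ι K i * ι K i * ι K j + ι K j * (ι K i * ι K i))
        ((q + q⁻¹) • (ι K i * ι K j * ι K i))

/-- The quantized enveloping algebra `U_q(sl4^+)`. -/
abbrev Uq (K : Type) [Field K] (q : K) := RingQuot (UqRel K q)

/-- The Chevalley generators `e1, e2, e3` of `U_q(sl4^+)`. -/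
def gen (K : Type) [Field K] (q : K) (i : Fin 3) : Uq K q :=
  RingQuot.mkAlgHom K (UqRel K q) (ι K i)

def X1 (K : Type) [Field K] (q : K) : Uq K q := gen K q 0
def X4 (K : Type) [Field K] (q : K) : Uq K q := gen K q 1
def X6 (K : Type) [Field K] (q : K) : Uq K q := gen K q 2
def X2 (K : Type) [Field K] (q : K) : Uq K q :=
  X1 K q * X4 K q - q⁻¹ • (X4 K q * X1 K q)
def X5 (K : Type) [Field K] (q : K) : Uq K q :=
  X4 K q * X6 K q - q⁻¹ • (X6 K q * X4 K q)
def X3 (K : Type) [Field K] (q : K) : Uq K q :=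
  X1 K q * X5 K q - q⁻¹ • (X5 K q * X1 K q)

def Delta1 (K : Type) [Field K] (q : K) : Uq K q := X3 K q
def Delta2 (K : Type) [Field K] (q : K) : Uq K q :=
  X2 K q * X5 K q - q • (X3 K q * X4 K q)
def Delta3 (K : Type) [Field K] (q : K) : Uq K q :=
  ((q - q⁻¹) ^ 2) • (X1 K q * X4 K q * X6 K q) - (q * (q - q⁻¹)) • (X2 K q * X6 K q)
    - (q * (q - q⁻¹)) • (X1 K q * X5 K q) + (q ^ 2) • X3 K q

/-- `Δ₁ = X3` satisfies `e2 Δ₁ = Δ₁ e2`, `e1 Δ₁ = q Δ₁ e1`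
and `e3 Δ₁ = q⁻¹ Δ₁ e3`. -/
theorem stmt2 (K : Type) [Field K] [CharZero K] (q : K) (hq0 : q ≠ 0)
    (hq : ∀ n : ℕ, 0 < n → q ^ n ≠ 1) :
    gen K q 1 * Delta1 K q = Delta1 K q * gen K q 1 ∧
    gen K q 0 * Delta1 K q = q • (Delta1 K q * gen K q 0) ∧
    gen K q 2 * Delta1 K q = q⁻¹ • (Delta1 K q * gen K q 2) := by
  set a := gen K q 0 with ha
  set b := gen K q 1 with hb
  set c := gen K q 2 with hc
  have hrel : ∀ x y, UqRel K q x y →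
      RingQuot.mkAlgHom K (UqRel K q) x = RingQuot.mkAlgHom K (UqRel K q) y :=
    fun x y h => RingQuot.mkAlgHom_rel K h
  have hac : a * c = c * a := by
    have := hrel _ _ UqRel.comm
    simp only [map_mul] at this
    exact this
  have hab : a * a * b + b * (a * a) = (q + q⁻¹) • (a * b * a) := by
    have := hrel _ _ (UqRel.serre 0 1 (Or.inr rfl))
    simp only [map_mul, map_add, map_smul] at this
    exact this
  have hba : b * b * a + a * (b * b) = (q + q⁻¹) • (b * a * b) := by
    have := hrel _ _ (UqRel.serre 1 0 (Or.inl rfl))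
    simp only [map_mul, map_add, map_smul] at this
    exact this
  have hbc : b * b * c + c * (b * b) = (q + q⁻¹) • (b * c * b) := by
    have := hrel _ _ (UqRel.serre 1 2 (Or.inr rfl))
    simp only [map_mul, map_add, map_smul] at this
    exact this
  have hcb : c * c * b + b * (c * c) = (q + q⁻¹) • (c * b * c) := by
    have := hrel _ _ (UqRel.serre 2 1 (Or.inl rfl))
    simp only [map_mul, map_add, map_smul] at this
    exact this
  have hacx : ∀ x : Uq K q, a * (c * x) = c * (a * x) := fun x => by
    rw [← mul_assoc, hac, mul_assoc]
  have ht : (q + q⁻¹) ≠ 0 := by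
    intro h
    have h2 : q ^ 2 = -1 := by field_simp at h; linear_combination h
    exact hq 4 (by norm_num) (by rw [show (4:ℕ) = 2*2 from rfl, pow_mul, h2]; ring)
  have hD : Delta1 K q = a * (b * c) - q⁻¹ • (a * (c * b)) - q⁻¹ • (b * (c * a))
      + (q⁻¹ * q⁻¹) • (c * (b * a)) := by
    simp only [Delta1, X3, X5, X1, X4, X6, ← ha, ← hb, ← hc]
    simp only [mul_sub, sub_mul, smul_mul_assoc, mul_smul_comm, smul_smul, smul_sub, mul_assoc]
    abel
  -- multiplied relations
  have E_ba_c := congrArg (· * c) hba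
  have E_a_bc := congrArg (a * ·) hbc
  have E_c_ba := congrArg (c * ·) hba
  have E_bc_a := congrArg (· * a) hbc
  have E_ab_c := congrArg (· * c) hab
  have E_c_ab := congrArg (c * ·) hab
  have E_cb_a := congrArg (· * a) hcb
  have E_a_cb := congrArg (a * ·) hcb
  have hK : (q + q⁻¹) • (b * (a * (b * c)) + c * (b * (a * b)))
      = (q + q⁻¹) • (a * (b * (c * b)) + b * (c * (b * a))) := by
    linear_combination (norm :=
      (simp only [mul_add, add_mul, smul_mul_assoc, mul_smul_comm, mul_assoc, hac, hacx,
        smul_smul, smul_sub, smul_add, sub_mul, mul_sub]; match_scalars <;> field_simp <;> ring))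
      - E_ba_c - E_c_ba + E_a_bc + E_bc_a
  have K1 : b * (a * (b * c)) + c * (b * (a * b))
      = a * (b * (c * b)) + b * (c * (b * a)) := by
    have := congrArg (fun x => (q + q⁻¹)⁻¹ • x) hK
    simpa [smul_smul, inv_mul_cancel₀ ht] using this
  refine ⟨?_, ?_, ?_⟩
  · rw [hD]
    linear_combination (norm :=
      (simp only [mul_add, add_mul, smul_mul_assoc, mul_smul_comm, mul_assoc, hac, hacx,
        smul_smul, smul_sub, smul_add, sub_mul, mul_sub]; match_scalars <;> field_simp <;> ring))
      (-q⁻¹) • E_ba_c + q⁻¹ • E_a_bc + (-(q⁻¹*q⁻¹)) • K1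
  · rw [hD]
    linear_combination (norm :=
      (simp only [mul_add, add_mul, smul_mul_assoc, mul_smul_comm, mul_assoc, hac, hacx,
        smul_smul, smul_sub, smul_add, sub_mul, mul_sub]; match_scalars <;> field_simp <;> ring))
      E_ab_c - q⁻¹ • E_c_ab
  · rw [hD]
    linear_combination (norm :=
      (simp only [mul_add, add_mul, smul_mul_assoc, mul_smul_comm, mul_assoc, hac, hacx,
        smul_smul, smul_sub, smul_add, sub_mul, mul_sub]; match_scalars <;> field_simp <;> ring))
      (q⁻¹*q⁻¹) • E_cb_a - q⁻¹ • E_a_cb
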